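/- There is no real constant c such that Z(L(G)) ≤ c · B(G) holds for all graphs G. -/

import Mathlib

open scoped BigOperators

namespace Paper

variable {V : Type*}

/-- The zero-forcing closure: vertices that eventually become black starting from `S`. -/
inductive ZFClosure (G : SimpleGraph V) (S : Set V) : V → Prop
  | init {v : V} : v ∈ S → ZFClosure G S v
  | force {v w : V} : ZFClosure G S v → G.Adj v w →
      (∀ u, G.Adj v u → u ≠ w → ZFClosure G S u) → ZFClosure G S w

/-- `S` is a zero-forcing set of `G`. -/
def IsZeroForcingSet (G : SimpleGraph V) (S : Set V) : Prop :=
  ∀ v : V, ZFClosure G S v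

/-- The zero-forcing number `Z(G)`. -/
noncomputable def zfNumber (G : SimpleGraph V) : ℕ :=
  sInf {n | ∃ S : Set V, IsZeroForcingSet G S ∧ S.ncard = n}

/-- A state of the brushing process: the set of vertices that have fired (and hence
are clean), the set of dirty edges, and the number of brushes at each vertex. -/
structure BrushConfig (V : Type*) where
  fired : Set V
  dirty : Set (Sym2 V)
  brushes : V → ℕ

open Classical in
def BrushStep (G : SimpleGraph V) (restricted : Bool) (c c' : BrushConfig V) : Prop :=
  ∃ (v : V) (f : Sym2 V → ℕ),
    v ∉ c.fired ∧
    (∀ e ∈ c.dirty, v ∈ e → if restricted then f e = 1 else 1 ≤ f e) ∧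
    (∑ᶠ e ∈ {e ∈ c.dirty | v ∈ e}, f e) ≤ c.brushes v ∧
    c'.fired = insert v c.fired ∧
    c'.dirty = {e ∈ c.dirty | v ∉ e} ∧
    ∀ w : V, c'.brushes w =
      (if w = v then 0 else c.brushes w) + c.dirty.indicator f s(v, w)

/-- The initial brush configuration `ω` cleans the graph `G`:  starting with every vertex
and every edge dirty, some sequence of firings results in every vertex having fired. -/
def Cleans (G : SimpleGraph V) (restricted : Bool) (ω : V → ℕ) : Prop :=
  ∃ c : BrushConfig V,
    Relation.ReflTransGen (BrushStep G restricted) ⟨∅, G.edgeSet, ω⟩ c ∧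
    c.fired = Set.univ

/-- The brushing number `B(G)` (several brushes may traverse a single edge). -/
noncomputable def brushNumber (G : SimpleGraph V) : ℕ :=
  sInf {n | ∃ ω : V → ℕ, Cleans G false ω ∧ ∑ᶠ v, ω v = n}

/-- The restricted brushing number `b(G)` (each edge is traversed by exactly one brush). -/
noncomputable def brushNumber' (G : SimpleGraph V) : ℕ :=
  sInf {n | ∃ ω : V → ℕ, Cleans G true ω ∧ ∑ᶠ v, ω v = n}

/-! ### Auxiliary construction: a chain of `r` triangles -/

/-- The chain of `r` triangles: vertices `3i, 3i+1, 3i+2` form a triangle, and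
`3i+2` is joined to `3i+3`. -/
def tri (r : ℕ) : SimpleGraph (Fin (3 * r)) where
  Adj u v := u ≠ v ∧ (u.val / 3 = v.val / 3 ∨
    (u.val % 3 = 2 ∧ v.val = u.val + 1) ∨ (v.val % 3 = 2 ∧ u.val = v.val + 1))
  symm := by
    constructor
    rintro u v ⟨h1, h2⟩
    refine ⟨fun h => h1 h.symm, ?_⟩
    rcases h2 with h | h | h
    · exact Or.inl h.symm
    · exact Or.inr (Or.inr h)
    · exact Or.inr (Or.inl h)
  loopless := ⟨fun u h => h.1 rfl⟩

lemma tri_adj (r : ℕ) (u v : Fin (3 * r)) :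
    (tri r).Adj u v ↔ u ≠ v ∧ (u.val / 3 = v.val / 3 ∨
    (u.val % 3 = 2 ∧ v.val = u.val + 1) ∨ (v.val % 3 = 2 ∧ u.val = v.val + 1)) := Iff.rfl

/-! ### Zero-forcing lower bound via forts -/

/-- If `F` is a "fort" (every vertex outside `F` adjacent to a vertex of `F` is adjacent
to at least two vertices of `F`) disjoint from `S`, then the zero-forcing closure of `S`
avoids `F`. -/
lemma zf_avoid {W : Type*} {G : SimpleGraph W} {S F : Set W}
    (hF : ∀ v ∉ F, ∀ w ∈ F, G.Adj v w → ∃ u ∈ F, u ≠ w ∧ G.Adj v u)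
    (hS : ∀ s ∈ S, s ∉ F) : ∀ v, ZFClosure G S v → v ∉ F := by
  intro v h
  induction h with
  | init h => exact hS _ h
  | force hv hadj hall ihv ihall =>
    intro hw
    obtain ⟨u, huF, huw, hadj'⟩ := hF _ ihv _ hw hadj
    exact ihall u hadj' huw huF

/-- The `i`-th fort: edges of the `i`-th triangle, as vertices of the line graph. -/
def fort (r i : ℕ) : Set (tri r).edgeSet :=
  {e | ∀ v ∈ (e : Sym2 (Fin (3 * r))), v.val / 3 = i}

lemma third_exists (r i : ℕ) (v w : Fin (3 * r)) (hvw : v ≠ w)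
    (hv : v.val / 3 = i) (hw : w.val / 3 = i) :
    ∃ w' : Fin (3 * r), w' ≠ v ∧ w' ≠ w ∧ w'.val / 3 = i := by
  have h1 : v.val ≠ w.val := fun h => hvw (Fin.ext h)
  have h2 := v.isLt
  have h3 := w.isLt
  refine ⟨⟨3 * i + (3 - v.val % 3 - w.val % 3), by omega⟩, ?_, ?_, ?_⟩ <;>
    simp only [Ne, Fin.ext_iff, Fin.val_mk] <;> omega

lemma fort_prop (r i : ℕ) :
    ∀ e ∉ fort r i, ∀ f ∈ fort r i, (tri r).lineGraph.Adj e f →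
      ∃ u ∈ fort r i, u ≠ f ∧ (tri r).lineGraph.Adj e u := by
  intro e he f hf hadj
  rw [SimpleGraph.lineGraph_adj_iff_exists] at hadj
  obtain ⟨hne, v, hve, hvf⟩ := hadj
  obtain ⟨w, hfw⟩ := Sym2.mem_iff_exists.mp hvf
  have hadjvw : (tri r).Adj v w := by
    have h2 := f.2
    rw [hfw] at h2
    exact (tri r).mem_edgeSet.mp h2
  have hvw : v ≠ w := (tri r).ne_of_adj hadjvw
  have hvi : v.val / 3 = i := hf v hvf
  have hwi : w.val / 3 = i := hf w (by rw [hfw]; exact Sym2.mem_mk_right v w)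
  obtain ⟨w', hw'v, hw'w, hw'i⟩ := third_exists r i v w hvw hvi hwi
  have hadjvw' : (tri r).Adj v w' := by
    refine ⟨fun h => hw'v h.symm, Or.inl ?_⟩
    rw [hvi, hw'i]
  refine ⟨⟨s(v, w'), (tri r).mem_edgeSet.mpr hadjvw'⟩, ?_, ?_, ?_⟩
  · intro x hx
    rcases Sym2.mem_iff.mp hx with rfl | rfl
    · exact hvi
    · exact hw'i
  · intro h
    apply hw'w
    have := congrArg Subtype.val h
    simp only at this
    rw [hfw] at this
    exact Sym2.congr_right.mp this
  · rw [SimpleGraph.lineGraph_adj_iff_exists]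
    refine ⟨?_, v, hve, Sym2.mem_mk_left v w'⟩
    intro h
    apply he
    rw [h]
    intro x hx
    rcases Sym2.mem_iff.mp hx with rfl | rfl
    · exact hvi
    · exact hw'i

lemma zf_lower (r : ℕ) : r ≤ zfNumber (tri r).lineGraph := by
  apply le_csInf
  · exact ⟨(Set.univ : Set (tri r).edgeSet).ncard, Set.univ,
      fun v => ZFClosure.init (Set.mem_univ v), rfl⟩
  · rintro n ⟨S, hS, rfl⟩
    have key : ∀ i : Fin r, ∃ e, e ∈ S ∧ e ∈ fort r i.val := by
      intro i
      by_contra hcon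
      push_neg at hcon
      have h0 : 3 * i.val < 3 * r := by have := i.isLt; omega
      have h1 : 3 * i.val + 1 < 3 * r := by have := i.isLt; omega
      have hedge : (tri r).Adj ⟨3 * i.val, h0⟩ ⟨3 * i.val + 1, h1⟩ := by
        refine ⟨?_, Or.inl (by simp only [Fin.val_mk]; omega)⟩
        simp only [Ne, Fin.ext_iff, Fin.val_mk]
        omega
      set t : (tri r).edgeSet :=
        ⟨s(⟨3 * i.val, h0⟩, ⟨3 * i.val + 1, h1⟩), (tri r).mem_edgeSet.mpr hedge⟩ with ht
      have htF : t ∈ fort r i.val := by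
        intro x hx
        rcases Sym2.mem_iff.mp hx with rfl | rfl <;> simp only [Fin.val_mk] <;> omega
      exact zf_avoid (fort_prop r i.val) hcon t (hS t) htF
    choose g hgS hgF using key
    have ginj : Function.Injective g := by
      intro i j hij
      obtain ⟨a, ha⟩ : ∃ a, a ∈ ((g i : (tri r).edgeSet) : Sym2 (Fin (3 * r))) := by
        refine Sym2.ind (fun a b => ⟨a, ?_⟩) ((g i : (tri r).edgeSet) : Sym2 (Fin (3 * r)))
        exact Sym2.mem_mk_left a b
      have h1 : a.val / 3 = i.val := hgF i a ha
      have h2 : a.val / 3 = j.val := hgF j a (by rw [← hij]; exact ha)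
      exact Fin.ext (by omega)
    have hfin : Finite (↥S) := Subtype.finite
    have hcard : Nat.card (Fin r) ≤ Nat.card (↥S) := by
      refine Nat.card_le_card_of_injective (fun i => (⟨g i, hgS i⟩ : ↥S)) ?_
      intro i j hij
      exact ginj (congrArg Subtype.val hij)
    have : Nat.card (↥S) = S.ncard := Nat.card_coe_set_eq S
    simp only [Nat.card_eq_fintype_card, Fintype.card_fin] at hcard
    omega

/-! ### Brushing upper bound -/

/-- Brush distribution at time `k` in the cleaning of the chain of triangles. -/
def bru (r : ℕ) (k : ℕ) : Fin (3 * r) → ℕ := fun v =>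
  if v.val = k then (if v.val % 3 = 1 then 1 else 2)
  else if v.val % 3 = 2 ∧ v.val = k + 1 then 1 else 0

/-- Configuration after `k` firings. -/
def cfg (r : ℕ) (k : ℕ) : BrushConfig (Fin (3 * r)) :=
  ⟨{v | v.val < k}, {e | e ∈ (tri r).edgeSet ∧ ∀ v ∈ e, k ≤ v.val}, bru r k⟩

lemma step (r k : ℕ) (hk : k < 3 * r) :
    BrushStep (tri r) false (cfg r k) (cfg r (k + 1)) := by
  refine ⟨⟨k, hk⟩, fun _ => if k % 3 = 2 then 2 else 1, ?_, ?_, ?_, ?_, ?_, ?_⟩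
  · simp [cfg]
  · intro e _ _
    simp only [Bool.false_eq_true, if_false]
    split <;> omega
  · -- the finsum bound
    have himg : {e ∈ (cfg r k).dirty | (⟨k, hk⟩ : Fin (3 * r)) ∈ e}
        = (fun w => s((⟨k, hk⟩ : Fin (3 * r)), w)) ''
            {w | (tri r).Adj ⟨k, hk⟩ w ∧ k < w.val} := by
      ext e
      induction e using Sym2.ind with
      | _ a b =>
        simp only [cfg, Set.mem_setOf_eq, Set.mem_image, SimpleGraph.mem_edgeSet,
          Sym2.mem_iff, forall_eq_or_imp, forall_eq]
        constructor
        · rintro ⟨⟨hadj, h1, h2⟩, hx | hx⟩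
          · refine ⟨b, ⟨hx ▸ hadj, ?_⟩, by rw [hx]⟩
            have : a ≠ b := (tri r).ne_of_adj hadj
            have : a.val ≠ b.val := fun h => this (Fin.ext h)
            have hav : a.val = k := by rw [← hx]
            omega
          · refine ⟨a, ⟨hx ▸ ((tri r).adj_symm hadj), ?_⟩, by rw [hx, Sym2.eq_swap]⟩
            have : a ≠ b := (tri r).ne_of_adj hadj
            have : a.val ≠ b.val := fun h => this (Fin.ext h)
            have hbv : b.val = k := by rw [← hx]
            omega
        · rintro ⟨w, ⟨hadj, hlt⟩, heq⟩
          rcases Sym2.eq_iff.mp heq with ⟨h1, h2⟩ | ⟨h1, h2⟩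
          · subst h1; subst h2
            exact ⟨⟨hadj, le_refl k, le_of_lt hlt⟩, Or.inl rfl⟩
          · subst h1; subst h2
            exact ⟨⟨(tri r).adj_symm hadj, le_of_lt hlt, le_refl k⟩, Or.inr rfl⟩
    rw [himg, finsum_mem_image (fun w1 _ w2 _ h => Sym2.congr_right.mp h)]
    have hbx : (cfg r k).brushes ⟨k, hk⟩ = if k % 3 = 1 then 1 else 2 := by
      simp [cfg, bru]
    rw [hbx]
    have hm : k % 3 = 0 ∨ k % 3 = 1 ∨ k % 3 = 2 := by omega
    rcases hm with hm | hm | hm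
    · have hk2 : k + 2 < 3 * r := by omega
      have hN : {w | (tri r).Adj ⟨k, hk⟩ w ∧ k < w.val}
          = {(⟨k + 1, by omega⟩ : Fin (3 * r)), ⟨k + 2, hk2⟩} := by
        ext w
        have := w.isLt
        simp only [Set.mem_setOf_eq, Set.mem_insert_iff, Set.mem_singleton_iff,
          tri_adj, Ne, Fin.ext_iff, Fin.val_mk]
        omega
      rw [hN, finsum_mem_pair (by simp only [Ne, Fin.ext_iff, Fin.val_mk]; omega)]
      norm_num [hm]
    · have hk1 : k + 1 < 3 * r := by omega
      have hN : {w | (tri r).Adj ⟨k, hk⟩ w ∧ k < w.val}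
          = {(⟨k + 1, hk1⟩ : Fin (3 * r))} := by
        ext w
        have := w.isLt
        simp only [Set.mem_setOf_eq, Set.mem_singleton_iff,
          tri_adj, Ne, Fin.ext_iff, Fin.val_mk]
        omega
      rw [hN, finsum_mem_singleton]
      norm_num [hm]
    · rcases lt_or_ge (k + 1) (3 * r) with hk1 | hk1
      · have hN : {w | (tri r).Adj ⟨k, hk⟩ w ∧ k < w.val}
            = {(⟨k + 1, hk1⟩ : Fin (3 * r))} := by
          ext w
          have := w.isLt
          simp only [Set.mem_setOf_eq, Set.mem_singleton_iff,
            tri_adj, Ne, Fin.ext_iff, Fin.val_mk]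
          omega
        rw [hN, finsum_mem_singleton]
        norm_num [hm]
      · have hN : {w | (tri r).Adj ⟨k, hk⟩ w ∧ k < w.val} = (∅ : Set (Fin (3 * r))) := by
          ext w
          have := w.isLt
          simp only [Set.mem_setOf_eq, Set.mem_empty_iff_false, iff_false,
            tri_adj, Ne, Fin.ext_iff, Fin.val_mk, not_and]
          omega
        rw [hN, finsum_mem_empty]
        norm_num [hm]
  · ext v
    simp only [cfg, Set.mem_setOf_eq, Set.mem_insert_iff, Fin.ext_iff, Fin.val_mk]
    omega
  · ext e
    induction e using Sym2.ind with
    | _ a b =>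
      simp only [cfg, Set.mem_setOf_eq, Sym2.mem_iff, forall_eq_or_imp, forall_eq, not_or]
      simp only [Fin.ext_iff, Fin.val_mk]
      constructor
      · rintro ⟨hE, h1, h2⟩
        exact ⟨⟨hE, by omega, by omega⟩, by omega, by omega⟩
      · rintro ⟨⟨hE, h1, h2⟩, h3, h4⟩
        exact ⟨hE, by omega, by omega⟩
  · intro w
    classical
    have := w.isLt
    rw [Set.indicator_apply]
    have hmem : (s((⟨k, hk⟩ : Fin (3 * r)), w) ∈ (cfg r k).dirty)
        ↔ ((tri r).Adj ⟨k, hk⟩ w ∧ k ≤ w.val) := by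
      simp only [cfg, Set.mem_setOf_eq, SimpleGraph.mem_edgeSet, Sym2.mem_iff,
        forall_eq_or_imp, forall_eq, Fin.val_mk]
      constructor
      · rintro ⟨hadj, _, h2⟩
        exact ⟨hadj, h2⟩
      · rintro ⟨hadj, h2⟩
        exact ⟨hadj, le_refl k, h2⟩
    by_cases hd : s((⟨k, hk⟩ : Fin (3 * r)), w) ∈ (cfg r k).dirty
    · rw [if_pos hd]
      rw [hmem, tri_adj] at hd
      simp only [Ne, Fin.ext_iff, Fin.val_mk] at hd
      obtain ⟨⟨hne, hdis⟩, hle⟩ := hd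
      simp only [cfg, bru, Fin.ext_iff, Fin.val_mk]
      rcases hdis with h | h | h <;> split_ifs <;> omega
    · rw [if_neg hd]
      rw [hmem, tri_adj] at hd
      simp only [Ne, Fin.ext_iff, Fin.val_mk] at hd
      simp only [cfg, bru, Fin.ext_iff, Fin.val_mk, add_zero]
      split_ifs <;> omega

lemma chain (r : ℕ) : ∀ k, k ≤ 3 * r →
    Relation.ReflTransGen (BrushStep (tri r) false) (cfg r 0) (cfg r k)
  | 0, _ => Relation.ReflTransGen.refl
  | (k + 1), h =>
      Relation.ReflTransGen.tail (chain r k (by omega)) (step r k (by omega))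

lemma cleans (r : ℕ) : Cleans (tri r) false (bru r 0) := by
  refine ⟨cfg r (3 * r), ?_, ?_⟩
  · have h0 : (⟨∅, (tri r).edgeSet, bru r 0⟩ : BrushConfig (Fin (3 * r))) = cfg r 0 := by
      unfold cfg
      congr 1
      · ext v; simp
      · ext e; simp [Nat.zero_le]
    rw [h0]
    exact chain r (3 * r) le_rfl
  · ext v
    simp [cfg, v.isLt]

lemma brush_upper (r : ℕ) (hr : 1 ≤ r) : brushNumber (tri r) ≤ 2 := by
  apply Nat.sInf_le
  refine ⟨bru r 0, cleans r, ?_⟩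
  rw [finsum_eq_single _ (⟨0, by omega⟩ : Fin (3 * r))]
  · norm_num [bru]
  · intro b hb
    have h1 : ¬(b.val = 0) := by
      intro h
      exact hb (Fin.ext h)
    unfold bru
    rw [if_neg h1, if_neg (by omega)]

theorem no_constant_zfNumber_lineGraph_le_mul_brushNumber :
    ¬ ∃ c : ℝ, ∀ (V : Type) (_ : Fintype V) (G : SimpleGraph V),
      (zfNumber G.lineGraph : ℝ) ≤ c * (brushNumber G : ℝ) := by
  rintro ⟨c, hc⟩
  set r : ℕ := ⌈2 * |c|⌉₊ + 1 with hr
  have h1 : (r : ℝ) ≤ (zfNumber (tri r).lineGraph : ℝ) := by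
    exact_mod_cast zf_lower r
  have h2 : (brushNumber (tri r) : ℝ) ≤ 2 := by
    exact_mod_cast brush_upper r (by omega)
  have h3 := hc (Fin (3 * r)) inferInstance (tri r)
  have hB0 : (0 : ℝ) ≤ (brushNumber (tri r) : ℝ) := Nat.cast_nonneg _
  have h4 : c * (brushNumber (tri r) : ℝ) ≤ |c| * 2 := by
    calc c * (brushNumber (tri r) : ℝ) ≤ |c| * (brushNumber (tri r) : ℝ) :=
          mul_le_mul_of_nonneg_right (le_abs_self c) hB0
      _ ≤ |c| * 2 := mul_le_mul_of_nonneg_left h2 (abs_nonneg c)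
  have h5 : 2 * |c| ≤ (⌈2 * |c|⌉₊ : ℝ) := Nat.le_ceil _
  have h6 : (r : ℝ) = (⌈2 * |c|⌉₊ : ℝ) + 1 := by rw [hr]; push_cast; ring
  linarith

end Paper
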